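/- Let r = 2q+1 with q ≥ 3. Write e_2 = Σ_{1≤i<j≤r} x_i x_j. If f = Σ b_{ij} x_i x_j (i < j) is a quadratic form with b_{12} = 0 and b_{13} ≠ 0, then the product (x_2 - x_3)(x_4 - x_5)···(x_{r-1} - x_r) · f does not lie in the ideal (x_1^2,...,x_r^2); in particular its expansion contains the squarefree monomial x_1 x_2 x_3 x_4 x_6 ··· x_{2q} with nonzero coefficient b_{13}. -/

import Mathlib

open MvPolynomial Finset
set_option maxRecDepth 8000
set_option maxHeartbeats 1000000

def av (q : ℕ) (k : Fin q) : Fin (2*q+1) := ⟨2*k.1+1, by have := k.2; linarith⟩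
def bv (q : ℕ) (k : Fin q) : Fin (2*q+1) := ⟨2*k.1+2, by have := k.2; linarith⟩

def Sset (q : ℕ) (hq : 3 ≤ q) : Finset (Fin (2*q+1)) :=
  ({⟨0, by linarith⟩, ⟨1, by linarith⟩, ⟨2, by linarith⟩} : Finset (Fin (2*q+1))) ∪
    Finset.image (fun j : Fin (q - 1) =>
      (⟨2 * j.1 + 3, by have := j.2; clear hq; omega⟩ : Fin (2*q+1))) Finset.univ

noncomputable def mm (q : ℕ) (hq : 3 ≤ q) : Fin (2*q+1) →₀ ℕ := ∑ i ∈ Sset q hq, Finsupp.single i 1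

lemma mem_Sset {q : ℕ} (hq : 3 ≤ q) (v : Fin (2*q+1)) :
    v ∈ Sset q hq ↔ (v.1 ≤ 2 ∨ v.1 % 2 = 1) := by
  simp only [Sset, Finset.mem_union, Finset.mem_insert, Finset.mem_singleton, Finset.mem_image,
    Finset.mem_univ, true_and]
  constructor
  · rintro ((h|h|h) | ⟨j, rfl⟩) <;> subst_eqs <;> simp <;> omega
  · intro h
    rcases Nat.lt_or_ge v.1 3 with h3 | h3
    · left
      simp only [Fin.ext_iff]
      omega
    · right
      have hv := v.2
      refine ⟨⟨(v.1 - 3)/2, by omega⟩, ?_⟩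
      simp only [Fin.ext_iff]
      omega

lemma mm_apply {q : ℕ} (hq : 3 ≤ q) (v : Fin (2*q+1)) :
    mm q hq v = if (v.1 ≤ 2 ∨ v.1 % 2 = 1) then 1 else 0 := by
  classical
  rw [mm, Finsupp.finset_sum_apply]
  simp only [Finsupp.single_apply]
  rw [Finset.sum_ite_eq' (Sset q hq) v (fun _ => 1)]
  simp [mem_Sset hq]

lemma prod_X_monomial {K : Type*} [CommSemiring K] {σ ι : Type*} (s : Finset ι) (g : ι → σ) :
    ∏ k ∈ s, (X (g k) : MvPolynomial σ K) =
      monomial (∑ k ∈ s, Finsupp.single (g k) 1) 1 := by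
  classical
  induction s using Finset.cons_induction with
  | empty => simp
  | cons a s ha ih =>
      rw [Finset.prod_cons, ih, Finset.sum_cons, X, monomial_mul, one_mul]

lemma sqfree_coeff {K : Type*} [CommRing K] {n : ℕ} (g : MvPolynomial (Fin n) K)
    (hg : g ∈ Ideal.span (Set.range fun i : Fin n => (X i : MvPolynomial (Fin n) K) ^ 2))
    (μ : Fin n →₀ ℕ) (hμ : ∀ i, μ i ≤ 1) : coeff μ g = 0 := by
  classical
  rw [Ideal.mem_span_range_iff_exists_fun] at hg
  obtain ⟨c, hc⟩ := hg
  rw [← hc, coeff_sum]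
  refine Finset.sum_eq_zero fun i _ => ?_
  rw [pow_two, ← mul_assoc, coeff_mul_X']
  split_ifs with h1
  · rw [coeff_mul_X', if_neg]
    simp only [Finsupp.mem_support_iff, ne_eq, not_not, Finsupp.tsub_apply,
      Finsupp.single_eq_same]
    have := hμ i
    omega
  · rfl

lemma prod_neg' {R : Type*} [CommRing R] {ι : Type*} (s : Finset ι) (f : ι → R) :
    ∏ i ∈ s, (-f i) = (-1)^s.card * ∏ i ∈ s, f i := by
  classical
  induction s using Finset.cons_induction with
  | empty => simp
  | cons a s ha ih => rw [Finset.prod_cons, Finset.prod_cons, ih, Finset.card_cons, pow_succ]; ring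

noncomputable def nut (q : ℕ) (t : Finset (Fin q)) : Fin (2*q+1) →₀ ℕ :=
  (∑ k ∈ t, Finsupp.single (av q k) 1) + ∑ k ∈ Finset.univ \ t, Finsupp.single (bv q k) 1

lemma P_expand {K : Type*} [CommRing K] (q : ℕ) :
    (∏ k : Fin q, ((X (av q k) : MvPolynomial (Fin (2*q+1)) K) - X (bv q k))) =
      ∑ t ∈ (Finset.univ : Finset (Fin q)).powerset,
        monomial (nut q t) ((-1 : K) ^ (Finset.univ \ t).card) := by
  classical
  simp_rw [sub_eq_add_neg]
  rw [Finset.prod_add]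
  refine Finset.sum_congr rfl fun t ht => ?_
  have h2 : ∏ k ∈ univ \ t, (-X (bv q k) : MvPolynomial (Fin (2*q+1)) K)
      = (-1)^((univ \ t).card) *
        monomial (∑ k ∈ univ \ t, Finsupp.single (bv q k) 1) 1 := by
    rw [← prod_X_monomial, prod_neg']
  rw [prod_X_monomial, h2, mul_left_comm, monomial_mul, mul_one]
  rw [show ((-1 : MvPolynomial (Fin (2*q+1)) K) ^ (univ \ t).card)
      = C ((-1 : K) ^ (univ \ t).card) by rw [map_pow, map_neg, map_one],
    C_mul_monomial, mul_one, nut]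

lemma av_inj (q : ℕ) {k k' : Fin q} : av q k = av q k' ↔ k = k' := by
  constructor
  · intro h
    have := Fin.mk.injEq .. ▸ h
    simp [av, Fin.ext_iff] at h ⊢
    omega
  · rintro rfl; rfl

lemma nut_apply_av (q : ℕ) (t : Finset (Fin q)) (k₀ : Fin q) :
    nut q t (av q k₀) = if k₀ ∈ t then 1 else 0 := by
  classical
  have h2 : (∑ k ∈ univ \ t, Finsupp.single (bv q k) 1) (av q k₀) = 0 := by
    rw [Finsupp.finset_sum_apply]
    refine Finset.sum_eq_zero fun k hk => ?_
    rw [Finsupp.single_apply, if_neg]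
    simp only [bv, av, Fin.ext_iff]
    omega
  have h1 : (∑ k ∈ t, Finsupp.single (av q k) 1) (av q k₀) = if k₀ ∈ t then 1 else 0 := by
    rw [Finsupp.finset_sum_apply]
    simp only [Finsupp.single_apply, av_inj]
    exact Finset.sum_ite_eq' t k₀ (fun _ => 1)
  rw [nut, Finsupp.add_apply, h1, h2, add_zero]

lemma nut_apply_bv (q : ℕ) (t : Finset (Fin q)) (k₀ : Fin q) :
    nut q t (bv q k₀) = if k₀ ∈ t then 0 else 1 := by
  classical
  have h1 : (∑ k ∈ t, Finsupp.single (av q k) 1) (bv q k₀) = 0 := by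
    rw [Finsupp.finset_sum_apply]
    refine Finset.sum_eq_zero fun k hk => ?_
    rw [Finsupp.single_apply, if_neg]
    simp only [bv, av, Fin.ext_iff]
    omega
  have h2 : (∑ k ∈ univ \ t, Finsupp.single (bv q k) 1) (bv q k₀)
      = if k₀ ∈ univ \ t then 1 else 0 := by
    rw [Finsupp.finset_sum_apply]
    have hb : ∀ k k' : Fin q, bv q k = bv q k' ↔ k = k' := by
      intro k k'
      constructor
      · intro h
        simp only [bv, Fin.ext_iff] at h ⊢
        omega
      · rintro rfl; rfl
    simp only [Finsupp.single_apply, hb]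
    exact Finset.sum_ite_eq' _ k₀ (fun _ => 1)
  rw [nut, Finsupp.add_apply, h1, h2, zero_add]
  simp only [Finset.mem_sdiff, Finset.mem_univ, true_and]
  split_ifs with h h' h' <;> simp_all

lemma nut_apply_zero (q : ℕ) (t : Finset (Fin q)) :
    nut q t ⟨0, by omega⟩ = 0 := by
  classical
  rw [nut, Finsupp.add_apply, Finsupp.finset_sum_apply, Finsupp.finset_sum_apply]
  rw [Finset.sum_eq_zero (fun k hk => ?_), Finset.sum_eq_zero (fun k hk => ?_), add_zero] <;>
  · rw [Finsupp.single_apply, if_neg]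
    simp only [av, bv, Fin.ext_iff]
    omega

lemma nut_univ_apply {q : ℕ} (hq : 3 ≤ q) (v : Fin (2*q+1)) :
    nut q Finset.univ v = if v.1 % 2 = 1 then 1 else 0 := by
  classical
  by_cases hv : v.1 % 2 = 1
  · rw [if_pos hv]
    have hvlt : (v.1 - 1)/2 < q := by have := v.2; omega
    have hve : v = av q ⟨(v.1-1)/2, hvlt⟩ := by
      simp only [av, Fin.ext_iff]
      omega
    rw [hve, nut_apply_av, if_pos (Finset.mem_univ _)]
  · rw [if_neg hv, nut, Finset.sdiff_self, Finset.sum_empty, add_zero,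
      Finsupp.finset_sum_apply]
    refine Finset.sum_eq_zero fun k hk => ?_
    rw [Finsupp.single_apply, if_neg]
    intro hc
    apply hv
    rw [← hc]
    show (2*k.1+1) % 2 = 1
    omega

lemma lemE {q : ℕ} (hq : 3 ≤ q) :
    nut q Finset.univ + Finsupp.single (⟨0, by linarith⟩ : Fin (2*q+1)) 1 +
      Finsupp.single (⟨2, by linarith⟩ : Fin (2*q+1)) 1 = mm q hq := by
  classical
  ext v
  rw [Finsupp.add_apply, Finsupp.add_apply, nut_univ_apply hq, mm_apply hq,
    Finsupp.single_apply, Finsupp.single_apply]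
  simp only [Fin.ext_iff]
  split_ifs <;> omega

lemma lemD {q : ℕ} (hq : 3 ≤ q) (t : Finset (Fin q)) (i j : Fin (2*q+1)) (hij : i < j)
    (h : nut q t + Finsupp.single i 1 + Finsupp.single j 1 = mm q hq) :
    (t = Finset.univ ∧ i = ⟨0, by linarith⟩ ∧ j = ⟨2, by linarith⟩) ∨
    (i = ⟨0, by linarith⟩ ∧ j = ⟨1, by linarith⟩) := by
  classical
  have hv : ∀ v, nut q t v + Finsupp.single i 1 v + Finsupp.single j 1 v = mm q hq v := by
    intro v
    rw [← Finsupp.add_apply, ← Finsupp.add_apply, h]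
  have hq0 : (0:ℕ) < q := by omega
  have l0 : 0 < 2*q+1 := by linarith
  have l1 : 1 < 2*q+1 := by linarith
  have l2 : 2 < 2*q+1 := by linarith
  have h0 := hv ⟨0, l0⟩
  rw [nut_apply_zero, mm_apply hq, Finsupp.single_apply, Finsupp.single_apply] at h0
  simp only [Fin.ext_iff, show ((⟨0, l0⟩ : Fin (2*q+1)) : ℕ) = 0 from rfl] at h0
  have hi0 : i.1 = 0 := by
    rcases Nat.eq_zero_or_pos j.1 with hj | hj
    · have : i.1 < j.1 := hij
      omega
    · split_ifs at h0 <;> omega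
  have hi : i = ⟨0, l0⟩ := Fin.ext hi0
  have n1 : nut q t ⟨1, l1⟩ = if (⟨0, hq0⟩ : Fin q) ∈ t then 1 else 0 :=
    nut_apply_av q t ⟨0, hq0⟩
  have n2 : nut q t ⟨2, l2⟩ = if (⟨0, hq0⟩ : Fin q) ∈ t then 0 else 1 :=
    nut_apply_bv q t ⟨0, hq0⟩
  have h1 := hv ⟨1, l1⟩
  simp only [n1, mm_apply hq, Finsupp.single_apply, Fin.ext_iff,
    show ((⟨1, l1⟩ : Fin (2*q+1)) : ℕ) = 1 from rfl, hi0] at h1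
  have h2 := hv ⟨2, l2⟩
  simp only [n2, mm_apply hq, Finsupp.single_apply, Fin.ext_iff,
    show ((⟨2, l2⟩ : Fin (2*q+1)) : ℕ) = 2 from rfl, hi0] at h2
  by_cases h0t : (⟨0, hq0⟩ : Fin q) ∈ t
  · simp only [h0t, if_true] at h1 h2
    have hj2 : j.1 = 2 := by split_ifs at h1 h2 <;> omega
    left
    refine ⟨?_, Fin.ext hi0, Fin.ext hj2⟩
    rw [Finset.eq_univ_iff_forall]
    intro k
    by_cases hk0 : k = ⟨0, hq0⟩
    · rwa [hk0]
    · have hkne : k.1 ≠ 0 := fun hc => hk0 (Fin.ext hc)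
      have hklt : 2*k.1+2 < 2*q+1 := by have := k.2; omega
      have nk : nut q t ⟨2*k.1+2, hklt⟩ = if k ∈ t then 0 else 1 := nut_apply_bv q t k
      have hk := hv ⟨2*k.1+2, hklt⟩
      simp only [nk, mm_apply hq, Finsupp.single_apply, Fin.ext_iff,
        show ((⟨2*k.1+2, hklt⟩ : Fin (2*q+1)) : ℕ) = 2*k.1+2 from rfl, hi0, hj2] at hk
      by_cases hkt : k ∈ t
      · exact hkt
      · exfalso
        simp only [hkt, if_false] at hk
        split_ifs at hk <;> omega
  · simp only [h0t, if_false] at h1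
    right
    have hj1 : j.1 = 1 := by split_ifs at h1 <;> first | omega | tauto
    exact ⟨Fin.ext hi0, Fin.ext hj1⟩

theorem keylem {K : Type*} [Field K] {q : ℕ} (hq : 3 ≤ q)
    (b : Fin (2*q+1) → Fin (2*q+1) → K)
    (hb12 : b ⟨0, by linarith⟩ ⟨1, by linarith⟩ = 0) :
    coeff (mm q hq)
      ((∏ k : Fin q, ((X (av q k) : MvPolynomial (Fin (2*q+1)) K) - X (bv q k))) *
        ∑ p ∈ Finset.univ.filter (fun p : Fin (2*q+1) × Fin (2*q+1) => p.1 < p.2),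
          b p.1 p.2 • (X p.1 * X p.2)) =
      b ⟨0, by linarith⟩ ⟨2, by linarith⟩ := by
  classical
  have l0 : 0 < 2*q+1 := by linarith
  have l2 : 2 < 2*q+1 := by linarith
  have hmono : ∀ (ν : Fin (2*q+1) →₀ ℕ) (c d : K) (i j : Fin (2*q+1)),
      (monomial ν c : MvPolynomial (Fin (2*q+1)) K) * (d • (X i * X j))
        = monomial (ν + Finsupp.single i 1 + Finsupp.single j 1) (c * d) := by
    intro ν c d i j
    simp [X, monomial_mul, smul_monomial, add_assoc, mul_comm]
  rw [P_expand, Finset.sum_mul, coeff_sum]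
  have step : ∀ t ∈ (Finset.univ : Finset (Fin q)).powerset,
      coeff (mm q hq) ((monomial (nut q t) ((-1:K)^((Finset.univ \ t).card))) *
        ∑ p ∈ Finset.univ.filter (fun p : Fin (2*q+1) × Fin (2*q+1) => p.1 < p.2),
          b p.1 p.2 • (X p.1 * X p.2))
      = ∑ p ∈ Finset.univ.filter (fun p : Fin (2*q+1) × Fin (2*q+1) => p.1 < p.2),
          if nut q t + Finsupp.single p.1 1 + Finsupp.single p.2 1 = mm q hq
          then (-1:K)^((Finset.univ \ t).card) * b p.1 p.2 else 0 := by
    intro t ht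
    rw [Finset.mul_sum, coeff_sum]
    refine Finset.sum_congr rfl fun p hp => ?_
    rw [hmono, coeff_monomial]
  rw [Finset.sum_congr rfl step]
  have houter : ∀ t ∈ (Finset.univ : Finset (Fin q)).powerset, t ≠ Finset.univ →
      (∑ p ∈ Finset.univ.filter (fun p : Fin (2*q+1) × Fin (2*q+1) => p.1 < p.2),
        if nut q t + Finsupp.single p.1 1 + Finsupp.single p.2 1 = mm q hq
        then (-1:K)^((Finset.univ \ t).card) * b p.1 p.2 else 0) = 0 := by
    intro t ht hne
    refine Finset.sum_eq_zero fun p hp => ?_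
    rw [Finset.mem_filter] at hp
    by_cases hc : nut q t + Finsupp.single p.1 1 + Finsupp.single p.2 1 = mm q hq
    · rcases lemD hq t p.1 p.2 hp.2 hc with ⟨h1, _, _⟩ | ⟨hi, hj⟩
      · exact absurd h1 hne
      · rw [if_pos hc, hi, hj]
        exact mul_eq_zero_of_right _ hb12
    · rw [if_neg hc]
  rw [Finset.sum_eq_single_of_mem Finset.univ (Finset.mem_powerset_self _) houter]
  have hmemp : (⟨⟨0, l0⟩, ⟨2, l2⟩⟩ : Fin (2*q+1) × Fin (2*q+1)) ∈
      Finset.univ.filter (fun p : Fin (2*q+1) × Fin (2*q+1) => p.1 < p.2) := by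
    rw [Finset.mem_filter]
    exact ⟨Finset.mem_univ _, by simp [Fin.lt_def]⟩
  have hinner : ∀ p ∈ Finset.univ.filter (fun p : Fin (2*q+1) × Fin (2*q+1) => p.1 < p.2),
      p ≠ (⟨⟨0, l0⟩, ⟨2, l2⟩⟩ : Fin (2*q+1) × Fin (2*q+1)) →
      (if nut q Finset.univ + Finsupp.single p.1 1 + Finsupp.single p.2 1 = mm q hq
        then (-1:K)^((Finset.univ \ (Finset.univ : Finset (Fin q))).card) * b p.1 p.2 else 0) = 0 := by
    intro p hp hne
    rw [Finset.mem_filter] at hp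
    by_cases hc : nut q Finset.univ + Finsupp.single p.1 1 + Finsupp.single p.2 1 = mm q hq
    · rcases lemD hq Finset.univ p.1 p.2 hp.2 hc with ⟨_, hi, hj⟩ | ⟨hi, hj⟩
      · exact absurd (Prod.ext hi hj) hne
      · rw [if_pos hc, hi, hj]
        exact mul_eq_zero_of_right _ hb12
    · rw [if_neg hc]
  rw [Finset.sum_eq_single_of_mem _ hmemp hinner]
  rw [if_pos (lemE hq)]
  rw [Finset.sdiff_self, Finset.card_empty, pow_zero, one_mul]

theorem stmt18 (K : Type*) [Field K] [CharZero K] (q : ℕ) (hq : 3 ≤ q)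
    (b : Fin (2 * q + 1) → Fin (2 * q + 1) → K)
    (hb12 : b ⟨0, by omega⟩ ⟨1, by omega⟩ = 0)
    (hb13 : b ⟨0, by omega⟩ ⟨2, by omega⟩ ≠ 0)
    (f : MvPolynomial (Fin (2 * q + 1)) K)
    (hf : f = ∑ p ∈ Finset.univ.filter (fun p : Fin (2 * q + 1) × Fin (2 * q + 1) => p.1 < p.2),
      b p.1 p.2 • (X p.1 * X p.2)) :
    (∏ k : Fin q,
        ((X (⟨2 * k.1 + 1, by have := k.2; omega⟩ : Fin (2 * q + 1)) :
            MvPolynomial (Fin (2 * q + 1)) K) -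
          X (⟨2 * k.1 + 2, by have := k.2; omega⟩ : Fin (2 * q + 1)))) * f ∉
      Ideal.span (Set.range fun i : Fin (2 * q + 1) =>
        (X i : MvPolynomial (Fin (2 * q + 1)) K) ^ 2) ∧
    MvPolynomial.coeff
        (∑ i ∈ (({⟨0, by omega⟩, ⟨1, by omega⟩, ⟨2, by omega⟩} : Finset (Fin (2 * q + 1))) ∪
            Finset.image (fun j : Fin (q - 1) =>
              (⟨2 * j.1 + 3, by have := j.2; omega⟩ : Fin (2 * q + 1))) Finset.univ),
          Finsupp.single i 1)
        ((∏ k : Fin q,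
            ((X (⟨2 * k.1 + 1, by have := k.2; omega⟩ : Fin (2 * q + 1)) :
                MvPolynomial (Fin (2 * q + 1)) K) -
              X (⟨2 * k.1 + 2, by have := k.2; omega⟩ : Fin (2 * q + 1)))) * f) =
      b ⟨0, by omega⟩ ⟨2, by omega⟩ := by
  subst hf
  have key := keylem (K := K) hq b hb12
  have hle : ∀ i, mm q hq i ≤ 1 := by
    intro v
    rw [mm_apply hq]
    split_ifs <;> omega
  constructor
  · intro hmem
    have h0 := sqfree_coeff _ hmem (mm q hq) hle
    exact hb13 ((h0.symm.trans key).symm)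
  · exact key
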